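/- Assume v > 2. Setting ν_j := 2(Var(U_0) − γ(j)), there exists a constant C' > 0 such that for all integers n ≥ 1 and 1 ≤ j ≤ n one has E[( Σ_{i=0}^{n−j} ((U_{i+j} − U_i)² − ν_j) )²] ≤ C' n j. -/

import Mathlib

open MeasureTheory ProbabilityTheory Filter Finset
open scoped ProbabilityTheory ENNReal NNReal BigOperators

namespace DepNoise

variable {Ω : Type*} [MeasureSpace Ω]

/-- Variance of `U 0`. -/
noncomputable def varU (U : ℕ → Ω → ℝ) : ℝ :=
  (∫ ω, (U 0 ω) ^ 2) - (∫ ω, U 0 ω) ^ 2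

/-- Autocovariance `γ(h) = Cov(U 0, U h)`. -/
noncomputable def gammaCov (U : ℕ → Ω → ℝ) (h : ℕ) : ℝ :=
  (∫ ω, U 0 ω * U h ω) - (∫ ω, U 0 ω) * (∫ ω, U h ω)

/-- The σ-algebra `σ(U 0, …, U k)`. -/
def pastSigma (U : ℕ → Ω → ℝ) (k : ℕ) : MeasurableSpace Ω :=
  ⨆ i : Fin (k + 1), MeasurableSpace.comap (U i) inferInstance

/-- The σ-algebra `σ(U m, U (m+1), …)`. -/
def futureSigma (U : ℕ → Ω → ℝ) (m : ℕ) : MeasurableSpace Ω :=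
  ⨆ i : ℕ, MeasurableSpace.comap (U (m + i)) inferInstance



lemma integrable_of_bdd {Ω : Type*} [m0 : MeasurableSpace Ω] {μ : Measure Ω}
    [IsFiniteMeasure μ] {f : Ω → ℝ} (hf : Measurable f) {c : ℝ}
    (hc : ∀ ω, |f ω| ≤ c) : Integrable f μ := by
  refine ⟨hf.aestronglyMeasurable, MeasureTheory.HasFiniteIntegral.of_bounded
    (C := c) (Filter.Eventually.of_forall fun ω => ?_)⟩
  simpa [Real.norm_eq_abs] using hc ω

lemma sign_abs {Ω : Type*} [m0 : MeasurableSpace Ω] {A : Set Ω} {g : Ω → ℝ}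
    (hA : A = {ω | 0 ≤ g ω}) (ω : Ω) :
    (A.indicator (fun _ => (2:ℝ)) ω - 1) * g ω = |g ω| := by
  by_cases h : ω ∈ A
  · rw [Set.indicator_of_mem h]
    have : 0 ≤ g ω := by rw [hA] at h; exact h
    rw [abs_of_nonneg this]; ring
  · rw [Set.indicator_of_notMem h]
    have : g ω < 0 := by rw [hA] at h; simpa using h
    rw [abs_of_nonpos this.le]; ring

lemma sign_bdd {Ω : Type*} (A : Set Ω) (ω : Ω) :
    |A.indicator (fun _ => (2:ℝ)) ω - 1| ≤ 1 := by
  by_cases h : ω ∈ A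
  · rw [Set.indicator_of_mem h]; norm_num
  · rw [Set.indicator_of_notMem h]; norm_num

/-- The sign step: the L¹ distance of a conditional expectation from a constant
is a covariance against a `±1`-valued `m`-measurable function. -/
lemma signstep {Ω : Type*} [m0 : MeasurableSpace Ω] {μ : Measure Ω}
    [IsProbabilityMeasure μ]
    {m : MeasurableSpace Ω} (hm : m ≤ m0) {W : Ω → ℝ}
    (hWm : Measurable[m0] W) (hWi : Integrable W μ)
    (c : ℝ) :
    ∃ A : Set Ω, MeasurableSet[m] A ∧
      ∫ ω, |(μ[W|m]) ω - c| ∂μ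
        = (∫ ω, (A.indicator (fun _ => (2:ℝ)) ω - 1) * W ω ∂μ)
          - (∫ ω, (A.indicator (fun _ => (2:ℝ)) ω - 1) ∂μ) * c := by
  set η : Ω → ℝ := μ[W|m] with hηdef
  have hηm : Measurable[m] η := stronglyMeasurable_condExp.measurable
  have hηi : Integrable η μ := integrable_condExp
  set A : Set Ω := {ω | 0 ≤ η ω - c} with hAdef
  have hA : MeasurableSet[m] A :=
    measurableSet_le measurable_const (hηm.sub measurable_const)
  set s : Ω → ℝ := fun ω => A.indicator (fun _ => (2:ℝ)) ω - 1 with hsdef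
  have hsm : Measurable[m] s :=
    (measurable_const.indicator hA).sub measurable_const
  have hsmax : Measurable[m0] s := hsm.mono hm le_rfl
  have hsb : ∀ ω, |s ω| ≤ 1 := fun ω => sign_bdd A ω
  have hsi : Integrable s μ := integrable_of_bdd (m0 := m0) hsmax hsb
  have hsηi : Integrable (fun ω => s ω * η ω) μ := by
    refine hηi.abs.mono' ((hsmax.mul (hηm.mono hm le_rfl)).aestronglyMeasurable)
      (Filter.Eventually.of_forall fun ω => ?_)
    rw [Real.norm_eq_abs, abs_mul]
    calc |s ω| * |η ω| ≤ 1 * |η ω| :=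
          mul_le_mul_of_nonneg_right (hsb ω) (abs_nonneg _)
      _ = |η ω| := one_mul _
  have hsWi : Integrable (s * W) μ := by
    refine hWi.abs.mono' ((hsmax.mul hWm).aestronglyMeasurable)
      (Filter.Eventually.of_forall fun ω => ?_)
    rw [Pi.mul_apply, Real.norm_eq_abs, abs_mul]
    calc |s ω| * |W ω| ≤ 1 * |W ω| :=
          mul_le_mul_of_nonneg_right (hsb ω) (abs_nonneg _)
      _ = |W ω| := one_mul _
  refine ⟨A, hA, ?_⟩
  have hpt : ∀ ω, |η ω - c| = s ω * η ω - s ω * c := by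
    intro ω
    rw [← sign_abs (g := fun ω => η ω - c) rfl ω]
    show (A.indicator (fun _ => (2:ℝ)) ω - 1) * (η ω - c) = _
    ring
  have hsc : Integrable (fun ω => s ω * c) μ := hsi.mul_const c
  calc ∫ ω, |η ω - c| ∂μ = ∫ ω, (s ω * η ω - s ω * c) ∂μ := by
        exact integral_congr_ae (Filter.Eventually.of_forall hpt)
    _ = (∫ ω, s ω * η ω ∂μ) - ∫ ω, s ω * c ∂μ := integral_sub hsηi hsc
    _ = (∫ ω, s ω * η ω ∂μ) - (∫ ω, s ω ∂μ) * c := by rw [integral_mul_const]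
    _ = (∫ ω, s ω * W ω ∂μ) - (∫ ω, s ω ∂μ) * c := by
        have hpull := condExp_mul_of_stronglyMeasurable_left (μ := μ) (m := m)
          hsm.stronglyMeasurable hsWi hWi
        have : ∫ ω, (s * W) ω ∂μ = ∫ ω, (s * η) ω ∂μ := by
          rw [← integral_condExp hm (f := s * W)]
          exact integral_congr_ae hpull
        have h2 : ∫ ω, s ω * W ω ∂μ = ∫ ω, s ω * η ω ∂μ := this
        rw [h2]

lemma rect {Ω : Type*} [m0 : MeasurableSpace Ω] {μ : Measure Ω}
    [IsProbabilityMeasure μ] {A B : Set Ω}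
    (hA : MeasurableSet A) (hB : MeasurableSet B) :
    (∫ ω, (B.indicator (fun _ => (2:ℝ)) ω - 1) *
        (A.indicator (fun _ => (2:ℝ)) ω - 1) ∂μ)
      - (∫ ω, (B.indicator (fun _ => (2:ℝ)) ω - 1) ∂μ)
        * (∫ ω, (A.indicator (fun _ => (2:ℝ)) ω - 1) ∂μ)
      = 4 * ((μ (A ∩ B)).toReal - (μ A).toReal * (μ B).toReal) := by
  have hiA : Integrable (A.indicator (fun _ => (2:ℝ))) μ :=
    (integrable_const (2:ℝ)).indicator hA
  have hiB : Integrable (B.indicator (fun _ => (2:ℝ))) μ :=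
    (integrable_const (2:ℝ)).indicator hB
  have hiAB : Integrable ((A ∩ B).indicator (fun _ => (4:ℝ))) μ :=
    (integrable_const (4:ℝ)).indicator (hA.inter hB)
  have hs : ∫ ω, (A.indicator (fun _ => (2:ℝ)) ω - 1) ∂μ
      = 2 * (μ A).toReal - 1 := by
    rw [integral_sub hiA (integrable_const 1), integral_indicator_const _ hA,
      integral_const]
    simp [mul_comm, measureReal_def]
  have ht : ∫ ω, (B.indicator (fun _ => (2:ℝ)) ω - 1) ∂μ
      = 2 * (μ B).toReal - 1 := by
    rw [integral_sub hiB (integrable_const 1), integral_indicator_const _ hB,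
      integral_const]
    simp [mul_comm, measureReal_def]
  have hts : ∫ ω, (B.indicator (fun _ => (2:ℝ)) ω - 1) *
      (A.indicator (fun _ => (2:ℝ)) ω - 1) ∂μ
      = 4 * (μ (A ∩ B)).toReal - 2 * (μ A).toReal - 2 * (μ B).toReal + 1 := by
    have hpt : ∀ ω, (B.indicator (fun _ => (2:ℝ)) ω - 1) *
        (A.indicator (fun _ => (2:ℝ)) ω - 1)
        = (A ∩ B).indicator (fun _ => (4:ℝ)) ω
          - A.indicator (fun _ => (2:ℝ)) ω - B.indicator (fun _ => (2:ℝ)) ω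
          + 1 := by
      intro ω
      by_cases hA' : ω ∈ A <;> by_cases hB' : ω ∈ B <;>
        simp [Set.indicator_apply, Set.mem_inter_iff, hA', hB'] <;> ring
    have hiSub2 : Integrable (fun ω => (A ∩ B).indicator (fun _ => (4:ℝ)) ω
        - A.indicator (fun _ => (2:ℝ)) ω) μ := hiAB.sub hiA
    have hiSub : Integrable (fun ω => (A ∩ B).indicator (fun _ => (4:ℝ)) ω
        - A.indicator (fun _ => (2:ℝ)) ω - B.indicator (fun _ => (2:ℝ)) ω) μ :=
      hiSub2.sub hiB
    rw [integral_congr_ae (Filter.Eventually.of_forall hpt)]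
    rw [integral_add hiSub (integrable_const 1),
      integral_sub hiSub2 hiB, integral_sub hiAB hiA,
      integral_indicator_const _ (hA.inter hB), integral_indicator_const _ hA,
      integral_indicator_const _ hB, integral_const]
    simp [mul_comm, measureReal_def]
  rw [hts, hs, ht]; ring

/-- Ibragimov-type covariance bound for bounded variables under an
event-level mixing bound. -/
lemma cov_bdd {Ω : Type*} [m0 : MeasurableSpace Ω] {μ : Measure Ω}
    [IsProbabilityMeasure μ]
    {m₁ m₂ : MeasurableSpace Ω} (hm₁ : m₁ ≤ m0) (hm₂ : m₂ ≤ m0)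
    {α : ℝ}
    (hα : ∀ A B : Set Ω, MeasurableSet[m₁] A → MeasurableSet[m₂] B →
      |(μ (A ∩ B)).toReal - (μ A).toReal * (μ B).toReal| ≤ α)
    {X Y : Ω → ℝ} (hX : Measurable[m₁] X) (hY : Measurable[m₂] Y)
    {a b : ℝ} (ha : 0 ≤ a) (hb : 0 ≤ b)
    (hXa : ∀ ω, |X ω| ≤ a) (hYb : ∀ ω, |Y ω| ≤ b) :
    |(∫ ω, X ω * Y ω ∂μ) - (∫ ω, X ω ∂μ) * ∫ ω, Y ω ∂μ| ≤ 4 * a * b * α := by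
  have hX0 : Measurable[m0] X := hX.mono hm₁ le_rfl
  have hY0 : Measurable[m0] Y := hY.mono hm₂ le_rfl
  have hXi : Integrable X μ := integrable_of_bdd (m0 := m0) hX0 hXa
  have hYi : Integrable Y μ := integrable_of_bdd (m0 := m0) hY0 hYb
  have hXYi : Integrable (X * Y) μ := by
    refine integrable_of_bdd (m0 := m0) (hX0.mul hY0) (c := a * b) fun ω => ?_
    rw [Pi.mul_apply, abs_mul]
    exact mul_le_mul (hXa ω) (hYb ω) (abs_nonneg _) ha
  set η : Ω → ℝ := μ[Y | m₁] with hηdef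
  have hηm : Measurable[m₁] η := stronglyMeasurable_condExp.measurable
  have hηm0 : Measurable[m0] η := hηm.mono hm₁ le_rfl
  have hηi : Integrable η μ := integrable_condExp
  -- step 1 : replace Y by η
  have h1 : ∫ ω, X ω * Y ω ∂μ = ∫ ω, X ω * η ω ∂μ := by
    have hpull := condExp_mul_of_stronglyMeasurable_left (μ := μ) (m := m₁)
      hX.stronglyMeasurable hXYi hYi
    calc ∫ ω, X ω * Y ω ∂μ = ∫ ω, (X * Y) ω ∂μ := rfl
      _ = ∫ ω, (μ[X * Y | m₁]) ω ∂μ := (integral_condExp hm₁).symm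
      _ = ∫ ω, (X * η) ω ∂μ := integral_congr_ae hpull
      _ = ∫ ω, X ω * η ω ∂μ := rfl
  have hηc_i : Integrable (fun ω => |η ω - ∫ ω', Y ω' ∂μ|) μ :=
    (hηi.sub (integrable_const _)).abs
  set c : ℝ := ∫ ω, Y ω ∂μ with hcdef
  have hXηi : Integrable (fun ω => X ω * η ω) μ := by
    refine (hηi.abs.const_mul a).mono' ((hX0.mul hηm0).aestronglyMeasurable)
      (Filter.Eventually.of_forall fun ω => ?_)
    rw [Real.norm_eq_abs, abs_mul]
    exact mul_le_mul_of_nonneg_right (hXa ω) (abs_nonneg _)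
  have hXdi : Integrable (fun ω => X ω * (η ω - c)) μ := by
    have : Integrable (fun ω => X ω * η ω - X ω * c) μ := hXηi.sub (hXi.mul_const c)
    refine this.congr (Filter.Eventually.of_forall fun ω => ?_)
    ring
  have step1 : |(∫ ω, X ω * Y ω ∂μ) - (∫ ω, X ω ∂μ) * c|
      ≤ a * ∫ ω, |η ω - c| ∂μ := by
    have hdiff : (∫ ω, X ω * Y ω ∂μ) - (∫ ω, X ω ∂μ) * c
        = ∫ ω, X ω * (η ω - c) ∂μ := by
      rw [h1]
      have e1 : ∫ ω, X ω * (η ω - c) ∂μ = ∫ ω, (X ω * η ω - X ω * c) ∂μ := by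
        congr 1; funext ω; ring
      rw [e1, integral_sub hXηi (hXi.mul_const c), integral_mul_const]
    rw [hdiff]
    calc |∫ ω, X ω * (η ω - c) ∂μ| ≤ ∫ ω, |X ω * (η ω - c)| ∂μ := by
          simpa only [Real.norm_eq_abs] using norm_integral_le_integral_norm
            (fun ω => X ω * (η ω - c)) (μ := μ)
      _ ≤ ∫ ω, a * |η ω - c| ∂μ := by
          refine integral_mono hXdi.abs (hηc_i.const_mul a) fun ω => ?_
          rw [abs_mul]
          exact mul_le_mul_of_nonneg_right (hXa ω) (abs_nonneg _)
      _ = a * ∫ ω, |η ω - c| ∂μ := integral_const_mul a _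
  -- step 2 : sign step on m₁
  obtain ⟨A, hAm, hQ1⟩ := signstep (m0 := m0) hm₁ hY0 hYi c
  set s : Ω → ℝ := fun ω => A.indicator (fun _ => (2:ℝ)) ω - 1 with hsdef
  have hsm : Measurable[m₁] s := (measurable_const.indicator hAm).sub measurable_const
  have hsm0 : Measurable[m0] s := hsm.mono hm₁ le_rfl
  have hsb : ∀ ω, |s ω| ≤ 1 := fun ω => sign_bdd A ω
  have hsi : Integrable s μ := integrable_of_bdd (m0 := m0) hsm0 hsb
  have hsYi : Integrable (fun ω => s ω * Y ω) μ := by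
    refine integrable_of_bdd (m0 := m0) (hsm0.mul hY0) (c := 1 * b) fun ω => ?_
    rw [abs_mul]
    exact mul_le_mul (hsb ω) (hYb ω) (abs_nonneg _) zero_le_one
  -- conditional expectation of s on m₂
  set ζ : Ω → ℝ := μ[s | m₂] with hζdef
  have hζm : Measurable[m₂] ζ := stronglyMeasurable_condExp.measurable
  have hζm0 : Measurable[m0] ζ := hζm.mono hm₂ le_rfl
  have hζi : Integrable ζ μ := integrable_condExp
  set c' : ℝ := ∫ ω, s ω ∂μ with hc'def
  have hζc_i : Integrable (fun ω => |ζ ω - c'|) μ := (hζi.sub (integrable_const _)).abs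
  have h3a : ∫ ω, s ω * Y ω ∂μ = ∫ ω, Y ω * ζ ω ∂μ := by
    have hYsi : Integrable (Y * s) μ := by
      refine hsYi.congr (Filter.Eventually.of_forall fun ω => ?_)
      show s ω * Y ω = Y ω * s ω; ring
    have hpull := condExp_mul_of_stronglyMeasurable_left (μ := μ) (m := m₂)
      hY.stronglyMeasurable hYsi hsi
    calc ∫ ω, s ω * Y ω ∂μ = ∫ ω, (Y * s) ω ∂μ := by
          congr 1; funext ω; show s ω * Y ω = Y ω * s ω; ring
      _ = ∫ ω, (μ[Y * s | m₂]) ω ∂μ := (integral_condExp hm₂).symm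
      _ = ∫ ω, (Y * ζ) ω ∂μ := integral_congr_ae hpull
      _ = ∫ ω, Y ω * ζ ω ∂μ := rfl
  have hYζi : Integrable (fun ω => Y ω * ζ ω) μ := by
    refine (hζi.abs.const_mul b).mono' ((hY0.mul hζm0).aestronglyMeasurable)
      (Filter.Eventually.of_forall fun ω => ?_)
    rw [Real.norm_eq_abs, abs_mul]
    exact mul_le_mul_of_nonneg_right (hYb ω) (abs_nonneg _)
  have hYdi : Integrable (fun ω => Y ω * (ζ ω - c')) μ := by
    have : Integrable (fun ω => Y ω * ζ ω - Y ω * c') μ := hYζi.sub (hYi.mul_const c')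
    refine this.congr (Filter.Eventually.of_forall fun ω => ?_)
    ring
  have step3 : (∫ ω, s ω * Y ω ∂μ) - (∫ ω, s ω ∂μ) * c
      ≤ b * ∫ ω, |ζ ω - c'| ∂μ := by
    have hcc : (∫ ω, s ω ∂μ) * c = c' * c := rfl
    have hdiff : (∫ ω, s ω * Y ω ∂μ) - (∫ ω, s ω ∂μ) * c
        = ∫ ω, Y ω * (ζ ω - c') ∂μ := by
      rw [h3a, hcc]
      have e1 : ∫ ω, Y ω * (ζ ω - c') ∂μ = ∫ ω, (Y ω * ζ ω - Y ω * c') ∂μ := by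
        congr 1; funext ω; ring
      rw [e1, integral_sub hYζi (hYi.mul_const c'), integral_mul_const]
      have : (∫ ω, Y ω ∂μ) = c := rfl
      rw [this]; ring
    rw [hdiff]
    calc ∫ ω, Y ω * (ζ ω - c') ∂μ ≤ |∫ ω, Y ω * (ζ ω - c') ∂μ| := le_abs_self _
      _ ≤ ∫ ω, |Y ω * (ζ ω - c')| ∂μ := by
          simpa only [Real.norm_eq_abs] using norm_integral_le_integral_norm
            (fun ω => Y ω * (ζ ω - c')) (μ := μ)
      _ ≤ ∫ ω, b * |ζ ω - c'| ∂μ := by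
          refine integral_mono hYdi.abs (hζc_i.const_mul b) fun ω => ?_
          rw [abs_mul]
          exact mul_le_mul_of_nonneg_right (hYb ω) (abs_nonneg _)
      _ = b * ∫ ω, |ζ ω - c'| ∂μ := integral_const_mul b _
  -- step 4 : sign step on m₂ and the rectangle bound
  obtain ⟨B, hBm, hQ2⟩ := signstep (m0 := m0) hm₂ hsm0 hsi c'
  have step4 : ∫ ω, |ζ ω - c'| ∂μ ≤ 4 * α := by
    rw [hQ2]
    have := rect (m0 := m0) (μ := μ) (hm₁ A hAm) (hm₂ B hBm)
    rw [this]
    have h4 := hα A B hAm hBm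
    calc 4 * ((μ (A ∩ B)).toReal - (μ A).toReal * (μ B).toReal)
        ≤ 4 * |(μ (A ∩ B)).toReal - (μ A).toReal * (μ B).toReal| := by
          have := le_abs_self ((μ (A ∩ B)).toReal - (μ A).toReal * (μ B).toReal)
          linarith
      _ ≤ 4 * α := by linarith
  -- assemble
  have hQ1' : ∫ ω, |η ω - c| ∂μ ≤ b * (4 * α) := by
    rw [hQ1]
    calc (∫ ω, s ω * Y ω ∂μ) - (∫ ω, s ω ∂μ) * c
        ≤ b * ∫ ω, |ζ ω - c'| ∂μ := step3
      _ ≤ b * (4 * α) := mul_le_mul_of_nonneg_left step4 hb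
  calc |(∫ ω, X ω * Y ω ∂μ) - (∫ ω, X ω ∂μ) * c|
      ≤ a * ∫ ω, |η ω - c| ∂μ := step1
    _ ≤ a * (b * (4 * α)) := mul_le_mul_of_nonneg_left hQ1' ha
    _ = 4 * a * b * α := by ring


noncomputable def trunc (M x : ℝ) : ℝ := max (-M) (min M x)

lemma trunc_continuous (M : ℝ) : Continuous (trunc M) :=
  continuous_const.max (continuous_const.min continuous_id)

lemma trunc_abs_le (M : ℝ) (hM : 0 ≤ M) (x : ℝ) : |trunc M x| ≤ M := by
  rw [abs_le, trunc]
  constructor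
  · exact le_max_left _ _
  · exact max_le (by linarith) (min_le_left _ _)

lemma trunc_abs_le_abs (M : ℝ) (hM : 0 ≤ M) (x : ℝ) : |trunc M x| ≤ |x| := by
  rw [trunc]
  rcases le_total x (-M) with h | h
  · rw [max_eq_left (le_trans (min_le_right _ _) h)]
    rw [abs_of_nonpos (by linarith), abs_of_nonpos (by linarith)]
    linarith
  · rcases le_total M x with h2 | h2
    · rw [min_eq_left h2, max_eq_right (by linarith)]
      rw [abs_of_nonneg hM]
      calc M ≤ x := h2
        _ ≤ |x| := le_abs_self x
    · rw [min_eq_right h2, max_eq_right h]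

lemma trunc_sub_le (M : ℝ) (hM : 0 < M) (x : ℝ) :
    |x - trunc M x| ≤ |x| ^ 3 / M ^ 2 := by
  have habs : |x| ^ 3 = |x| * x ^ 2 := by
    rw [← sq_abs x]; ring
  rw [trunc]
  rcases le_total x (-M) with h | h
  · rw [max_eq_left (le_trans (min_le_right _ _) h)]
    rw [abs_of_nonpos (by linarith : x - -M ≤ 0), abs_of_nonpos (by linarith : x ≤ 0)]
    rw [le_div_iff₀ (by positivity : (0:ℝ) < M ^ 2)]
    nlinarith [sq_nonneg (x + M), sq_nonneg x, mul_pos hM hM, sq_nonneg (x - M)]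
  · rcases le_total M x with h2 | h2
    · rw [min_eq_left h2, max_eq_right (by linarith)]
      rw [abs_of_nonneg (by linarith : (0:ℝ) ≤ x - M),
        abs_of_nonneg (by linarith : (0:ℝ) ≤ x)]
      rw [le_div_iff₀ (by positivity : (0:ℝ) < M ^ 2)]
      nlinarith [sq_nonneg (x + M), sq_nonneg x, mul_pos hM hM, sq_nonneg (x - M)]
    · rw [min_eq_right h2, max_eq_right h]
      simp only [sub_self, abs_zero]
      positivity

lemma abs_cube_mul_le (x y : ℝ) : |x| ^ 3 * |y| ≤ (x ^ 6 + y ^ 2) / 2 := by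
  have e : (|x| ^ 3) ^ 2 = x ^ 6 := by
    have : (|x| ^ 3) ^ 2 = (|x| ^ 2) ^ 3 := by ring
    rw [this, sq_abs x]; ring
  nlinarith [sq_nonneg (|x| ^ 3 - |y|), sq_abs y, abs_nonneg x, abs_nonneg y]

lemma abs_cube_le (x : ℝ) : |x| ^ 3 ≤ (1 + x ^ 6) / 2 := by
  have h := abs_cube_mul_le x 1
  simp only [abs_one, mul_one, one_pow] at h
  linarith

lemma abs_le_one_add_sq (x : ℝ) : |x| ≤ (1 + x ^ 2) / 2 := by
  nlinarith [sq_nonneg (|x| - 1), sq_abs x]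


/-- Covariance bound for unbounded variables with sixth moments, via truncation. -/
lemma cov_mix {Ω : Type*} [m0 : MeasurableSpace Ω] {μ : Measure Ω}
    [IsProbabilityMeasure μ]
    {m₁ m₂ : MeasurableSpace Ω} (hm₁ : m₁ ≤ m0) (hm₂ : m₂ ≤ m0)
    {α : ℝ} (hαpos : 0 < α)
    (hα : ∀ A B : Set Ω, MeasurableSet[m₁] A → MeasurableSet[m₂] B →
      |(μ (A ∩ B)).toReal - (μ A).toReal * (μ B).toReal| ≤ α)
    {X Y : Ω → ℝ} (hX : Measurable[m₁] X) (hY : Measurable[m₂] Y)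
    {K : ℝ} (hK : 1 ≤ K)
    (hXi : Integrable X μ) (hYi : Integrable Y μ)
    (hXYi : Integrable (fun ω => X ω * Y ω) μ)
    (hX2i : Integrable (fun ω => X ω ^ 2) μ)
    (hY2i : Integrable (fun ω => Y ω ^ 2) μ)
    (hX6i : Integrable (fun ω => X ω ^ 6) μ)
    (hY6i : Integrable (fun ω => Y ω ^ 6) μ)
    (hX2 : ∫ ω, X ω ^ 2 ∂μ ≤ K) (hY2 : ∫ ω, Y ω ^ 2 ∂μ ≤ K)
    (hX6 : ∫ ω, X ω ^ 6 ∂μ ≤ K) (hY6 : ∫ ω, Y ω ^ 6 ∂μ ≤ K) :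
    |(∫ ω, X ω * Y ω ∂μ) - (∫ ω, X ω ∂μ) * ∫ ω, Y ω ∂μ|
      ≤ (4 + 4 * K ^ 2) * Real.sqrt α := by
  have hX0 : Measurable[m0] X := hX.mono hm₁ le_rfl
  have hY0 : Measurable[m0] Y := hY.mono hm₂ le_rfl
  set β : ℝ := Real.sqrt α with hβdef
  have hβ : 0 < β := Real.sqrt_pos.2 hαpos
  have hβ2 : β ^ 2 = α := Real.sq_sqrt hαpos.le
  set M : ℝ := Real.sqrt (1 / β) with hMdef
  have hM : 0 < M := Real.sqrt_pos.2 (by positivity)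
  have hM2 : M ^ 2 = 1 / β := Real.sq_sqrt (by positivity)
  have hMα : M ^ 2 * α = β := by
    rw [hM2, ← hβ2]; field_simp
  have hinvM : 1 / M ^ 2 = β := by rw [hM2]; field_simp
  set X' : Ω → ℝ := fun ω => trunc M (X ω) with hX'def
  set Y' : Ω → ℝ := fun ω => trunc M (Y ω) with hY'def
  have hX'm : Measurable[m₁] X' := (trunc_continuous M).measurable.comp hX
  have hY'm : Measurable[m₂] Y' := (trunc_continuous M).measurable.comp hY
  have hX'b : ∀ ω, |X' ω| ≤ M := fun ω => trunc_abs_le M hM.le _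
  have hY'b : ∀ ω, |Y' ω| ≤ M := fun ω => trunc_abs_le M hM.le _
  have hX'a : ∀ ω, |X' ω| ≤ |X ω| := fun ω => trunc_abs_le_abs M hM.le _
  have hY'a : ∀ ω, |Y' ω| ≤ |Y ω| := fun ω => trunc_abs_le_abs M hM.le _
  have hX'0 : Measurable[m0] X' := hX'm.mono hm₁ le_rfl
  have hY'0 : Measurable[m0] Y' := hY'm.mono hm₂ le_rfl
  have hX'i : Integrable X' μ := integrable_of_bdd (m0 := m0) hX'0 hX'b
  have hY'i : Integrable Y' μ := integrable_of_bdd (m0 := m0) hY'0 hY'b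
  -- the bounded covariance bound
  have hbdd := cov_bdd (m0 := m0) hm₁ hm₂ hα hX'm hY'm hM.le hM.le hX'b hY'b
  have hbdd' : |(∫ ω, X' ω * Y' ω ∂μ) - (∫ ω, X' ω ∂μ) * ∫ ω, Y' ω ∂μ|
      ≤ 4 * β := by
    calc |(∫ ω, X' ω * Y' ω ∂μ) - (∫ ω, X' ω ∂μ) * ∫ ω, Y' ω ∂μ|
        ≤ 4 * M * M * α := hbdd
      _ = 4 * (M ^ 2 * α) := by ring
      _ = 4 * β := by rw [hMα]
  -- integrability of cross terms
  have hX'Yi : Integrable (fun ω => X' ω * Y ω) μ := by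
    refine (hYi.abs.const_mul M).mono' ((hX'0.mul hY0).aestronglyMeasurable)
      (Filter.Eventually.of_forall fun ω => ?_)
    rw [Real.norm_eq_abs, abs_mul]
    exact mul_le_mul_of_nonneg_right (hX'b ω) (abs_nonneg _)
  have hX'Y'i : Integrable (fun ω => X' ω * Y' ω) μ := by
    refine integrable_of_bdd (m0 := m0) (hX'0.mul hY'0) (c := M * M) fun ω => ?_
    rw [abs_mul]
    exact mul_le_mul (hX'b ω) (hY'b ω) (abs_nonneg _) hM.le
  -- error bounds
  have key1 : ∀ x y : ℝ, |x - trunc M x| * |y| ≤ β * ((x ^ 6 + y ^ 2) / 2) := by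
    intro x y
    calc |x - trunc M x| * |y| ≤ |x| ^ 3 / M ^ 2 * |y| :=
          mul_le_mul_of_nonneg_right (trunc_sub_le M hM x) (abs_nonneg _)
      _ = β * (|x| ^ 3 * |y|) := by rw [div_eq_mul_one_div, one_div, ← hinvM]; ring
      _ ≤ β * ((x ^ 6 + y ^ 2) / 2) :=
          mul_le_mul_of_nonneg_left (abs_cube_mul_le x y) hβ.le
  have bound1 : |∫ ω, (X ω - X' ω) * Y ω ∂μ| ≤ K * β := by
    have hi : Integrable (fun ω => (X ω - X' ω) * Y ω) μ := by
      have : Integrable (fun ω => X ω * Y ω - X' ω * Y ω) μ := hXYi.sub hX'Yi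
      exact this.congr (Filter.Eventually.of_forall fun ω => by ring)
    have hdom : Integrable (fun ω => β * ((X ω ^ 6 + Y ω ^ 2) / 2)) μ :=
      ((hX6i.add hY2i).div_const 2).const_mul β
    calc |∫ ω, (X ω - X' ω) * Y ω ∂μ| ≤ ∫ ω, |(X ω - X' ω) * Y ω| ∂μ := by
          simpa only [Real.norm_eq_abs] using norm_integral_le_integral_norm
            (fun ω => (X ω - X' ω) * Y ω) (μ := μ)
      _ ≤ ∫ ω, β * ((X ω ^ 6 + Y ω ^ 2) / 2) ∂μ := by
          refine integral_mono hi.abs hdom fun ω => ?_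
          rw [abs_mul]
          exact key1 (X ω) (Y ω)
      _ = β * ((∫ ω, X ω ^ 6 ∂μ) + ∫ ω, Y ω ^ 2 ∂μ) / 2 := by
          rw [integral_const_mul, integral_div, integral_add hX6i hY2i]; ring
      _ ≤ β * (K + K) / 2 := by
          nlinarith [mul_nonneg hβ.le (sub_nonneg.2 (add_le_add hX6 hY2))]
      _ = K * β := by ring
  have bound2 : |∫ ω, X' ω * (Y ω - Y' ω) ∂μ| ≤ K * β := by
    have hi : Integrable (fun ω => X' ω * (Y ω - Y' ω)) μ := by
      have : Integrable (fun ω => X' ω * Y ω - X' ω * Y' ω) μ := hX'Yi.sub hX'Y'i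
      exact this.congr (Filter.Eventually.of_forall fun ω => by ring)
    have hdom : Integrable (fun ω => β * ((Y ω ^ 6 + X ω ^ 2) / 2)) μ :=
      ((hY6i.add hX2i).div_const 2).const_mul β
    calc |∫ ω, X' ω * (Y ω - Y' ω) ∂μ| ≤ ∫ ω, |X' ω * (Y ω - Y' ω)| ∂μ := by
          simpa only [Real.norm_eq_abs] using norm_integral_le_integral_norm
            (fun ω => X' ω * (Y ω - Y' ω)) (μ := μ)
      _ ≤ ∫ ω, β * ((Y ω ^ 6 + X ω ^ 2) / 2) ∂μ := by
          refine integral_mono hi.abs hdom fun ω => ?_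
          rw [abs_mul, mul_comm]
          calc |Y ω - Y' ω| * |X' ω| ≤ |Y ω - Y' ω| * |X ω| :=
                mul_le_mul_of_nonneg_left (hX'a ω) (abs_nonneg _)
            _ ≤ β * ((Y ω ^ 6 + X ω ^ 2) / 2) := key1 (Y ω) (X ω)
      _ = β * ((∫ ω, Y ω ^ 6 ∂μ) + ∫ ω, X ω ^ 2 ∂μ) / 2 := by
          rw [integral_const_mul, integral_div, integral_add hY6i hX2i]; ring
      _ ≤ β * (K + K) / 2 := by
          nlinarith [mul_nonneg hβ.le (sub_nonneg.2 (add_le_add hY6 hX2))]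
      _ = K * β := by ring
  have bound3 : ∀ (Z Z' : Ω → ℝ), Measurable[m0] Z → Integrable Z μ →
      Integrable Z' μ → (∀ ω, Z' ω = trunc M (Z ω)) →
      Integrable (fun ω => Z ω ^ 6) μ → (∫ ω, Z ω ^ 6 ∂μ) ≤ K →
      |(∫ ω, Z ω ∂μ) - ∫ ω, Z' ω ∂μ| ≤ K * β := by
    intro Z Z' hZ0 hZi hZ'i hZ'e hZ6i hZ6
    have hi : Integrable (fun ω => Z ω - Z' ω) μ := hZi.sub hZ'i
    have hdom : Integrable (fun ω => β * ((1 + Z ω ^ 6) / 2)) μ :=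
      (((integrable_const 1).add hZ6i).div_const 2).const_mul β
    calc |(∫ ω, Z ω ∂μ) - ∫ ω, Z' ω ∂μ| = |∫ ω, (Z ω - Z' ω) ∂μ| := by
          rw [integral_sub hZi hZ'i]
      _ ≤ ∫ ω, |Z ω - Z' ω| ∂μ := by
          simpa only [Real.norm_eq_abs] using norm_integral_le_integral_norm
            (fun ω => Z ω - Z' ω) (μ := μ)
      _ ≤ ∫ ω, β * ((1 + Z ω ^ 6) / 2) ∂μ := by
          refine integral_mono hi.abs hdom fun ω => ?_
          rw [hZ'e ω]
          calc |Z ω - trunc M (Z ω)| ≤ |Z ω| ^ 3 / M ^ 2 := trunc_sub_le M hM _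
            _ = β * |Z ω| ^ 3 := by
                rw [div_eq_mul_one_div, one_div, ← hinvM]; ring
            _ ≤ β * ((1 + Z ω ^ 6) / 2) :=
                mul_le_mul_of_nonneg_left (abs_cube_le (Z ω)) hβ.le
      _ = β * (1 + ∫ ω, Z ω ^ 6 ∂μ) / 2 := by
          rw [integral_const_mul, integral_div, integral_add (integrable_const 1) hZ6i,
            integral_const]
          simp; ring
      _ ≤ β * (1 + K) / 2 := by
          have h1 : 1 + (∫ ω, Z ω ^ 6 ∂μ) ≤ 1 + K := by linarith
          have := mul_le_mul_of_nonneg_left h1 hβ.le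
          linarith
      _ ≤ K * β := by nlinarith
  have bound5 : ∀ (Z : Ω → ℝ), Integrable Z μ →
      Integrable (fun ω => Z ω ^ 2) μ → (∫ ω, Z ω ^ 2 ∂μ) ≤ K →
      |∫ ω, Z ω ∂μ| ≤ K := by
    intro Z hZi hZ2i hZ2
    have hdom : Integrable (fun ω => (1 + Z ω ^ 2) / 2) μ :=
      ((integrable_const 1).add hZ2i).div_const 2
    calc |∫ ω, Z ω ∂μ| ≤ ∫ ω, |Z ω| ∂μ := by
          simpa only [Real.norm_eq_abs] using norm_integral_le_integral_norm Z (μ := μ)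
      _ ≤ ∫ ω, (1 + Z ω ^ 2) / 2 ∂μ :=
          integral_mono hZi.abs hdom fun ω => abs_le_one_add_sq (Z ω)
      _ = (1 + ∫ ω, Z ω ^ 2 ∂μ) / 2 := by
          rw [integral_div, integral_add (integrable_const 1) hZ2i, integral_const]
          simp
      _ ≤ (1 + K) / 2 := by linarith
      _ ≤ K := by linarith
  have hZ'X : ∀ ω, X' ω = trunc M (X ω) := fun ω => rfl
  have hZ'Y : ∀ ω, Y' ω = trunc M (Y ω) := fun ω => rfl
  have b3X := bound3 X X' hX0 hXi hX'i hZ'X hX6i hX6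
  have b3Y := bound3 Y Y' hY0 hYi hY'i hZ'Y hY6i hY6
  have b5Y := bound5 Y hYi hY2i hY2
  have b5X' : |∫ ω, X' ω ∂μ| ≤ K := by
    have : Integrable (fun ω => X' ω ^ 2) μ := by
      refine integrable_of_bdd (m0 := m0) (hX'0.pow_const 2) (c := M ^ 2) fun ω => ?_
      rw [abs_pow]
      calc |X' ω| ^ 2 ≤ M ^ 2 := pow_le_pow_left₀ (abs_nonneg _) (hX'b ω) 2
        _ = |M ^ 2| := (abs_of_nonneg (by positivity)).symm
        _ ≤ M ^ 2 := le_of_eq (abs_of_nonneg (by positivity))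
    refine bound5 X' hX'i ?_ ?_
    · exact this
    · calc ∫ ω, X' ω ^ 2 ∂μ ≤ ∫ ω, X ω ^ 2 ∂μ := by
            refine integral_mono this hX2i fun ω => ?_
            have h1 : |X' ω| ^ 2 ≤ |X ω| ^ 2 := pow_le_pow_left₀ (abs_nonneg _) (hX'a ω) 2
            calc X' ω ^ 2 = |X' ω| ^ 2 := (sq_abs _).symm
              _ ≤ |X ω| ^ 2 := h1
              _ = X ω ^ 2 := sq_abs _
        _ ≤ K := hX2
  -- split
  have split1 : ∫ ω, X ω * Y ω ∂μ = (∫ ω, (X ω - X' ω) * Y ω ∂μ)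
      + (∫ ω, X' ω * (Y ω - Y' ω) ∂μ) + ∫ ω, X' ω * Y' ω ∂μ := by
    have hi1 : Integrable (fun ω => (X ω - X' ω) * Y ω) μ := by
      have : Integrable (fun ω => X ω * Y ω - X' ω * Y ω) μ := hXYi.sub hX'Yi
      exact this.congr (Filter.Eventually.of_forall fun ω => by ring)
    have hi2 : Integrable (fun ω => X' ω * (Y ω - Y' ω)) μ := by
      have : Integrable (fun ω => X' ω * Y ω - X' ω * Y' ω) μ := hX'Yi.sub hX'Y'i
      exact this.congr (Filter.Eventually.of_forall fun ω => by ring)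
    have hi12 : Integrable (fun ω => (X ω - X' ω) * Y ω + X' ω * (Y ω - Y' ω)) μ :=
      hi1.add hi2
    have e1 : ∫ ω, X ω * Y ω ∂μ
        = ∫ ω, ((X ω - X' ω) * Y ω + X' ω * (Y ω - Y' ω) + X' ω * Y' ω) ∂μ := by
      congr 1; funext ω; ring
    rw [e1, integral_add hi12 hX'Y'i, integral_add hi1 hi2]
  have split2 : (∫ ω, X ω ∂μ) * (∫ ω, Y ω ∂μ)
      - (∫ ω, X' ω ∂μ) * (∫ ω, Y' ω ∂μ)
      = ((∫ ω, X ω ∂μ) - ∫ ω, X' ω ∂μ) * (∫ ω, Y ω ∂μ)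
        + (∫ ω, X' ω ∂μ) * ((∫ ω, Y ω ∂μ) - ∫ ω, Y' ω ∂μ) := by ring
  -- assemble
  have final : |(∫ ω, X ω * Y ω ∂μ) - (∫ ω, X ω ∂μ) * ∫ ω, Y ω ∂μ|
      ≤ 4 * β + (K * β + K * β) + (K * β * K + K * (K * β)) := by
    have e : (∫ ω, X ω * Y ω ∂μ) - (∫ ω, X ω ∂μ) * ∫ ω, Y ω ∂μ
        = ((∫ ω, X' ω * Y' ω ∂μ) - (∫ ω, X' ω ∂μ) * ∫ ω, Y' ω ∂μ)
          + ((∫ ω, (X ω - X' ω) * Y ω ∂μ) + ∫ ω, X' ω * (Y ω - Y' ω) ∂μ)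
          - (((∫ ω, X ω ∂μ) - ∫ ω, X' ω ∂μ) * (∫ ω, Y ω ∂μ)
            + (∫ ω, X' ω ∂μ) * ((∫ ω, Y ω ∂μ) - ∫ ω, Y' ω ∂μ)) := by
      rw [split1]; linarith [split2]
    rw [e]
    have t1 : |((∫ ω, X ω ∂μ) - ∫ ω, X' ω ∂μ) * (∫ ω, Y ω ∂μ)| ≤ K * β * K := by
      rw [abs_mul]
      exact mul_le_mul b3X b5Y (abs_nonneg _) (by positivity)
    have t2 : |(∫ ω, X' ω ∂μ) * ((∫ ω, Y ω ∂μ) - ∫ ω, Y' ω ∂μ)| ≤ K * (K * β) := by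
      rw [abs_mul]
      exact mul_le_mul b5X' b3Y (abs_nonneg _) (by linarith)
    calc |_ + _ - _| ≤ |((∫ ω, X' ω * Y' ω ∂μ) - (∫ ω, X' ω ∂μ) * ∫ ω, Y' ω ∂μ)|
          + |((∫ ω, (X ω - X' ω) * Y ω ∂μ) + ∫ ω, X' ω * (Y ω - Y' ω) ∂μ)|
          + |(((∫ ω, X ω ∂μ) - ∫ ω, X' ω ∂μ) * (∫ ω, Y ω ∂μ)
            + (∫ ω, X' ω ∂μ) * ((∫ ω, Y ω ∂μ) - ∫ ω, Y' ω ∂μ))| := by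
          exact (abs_sub _ _).trans (add_le_add_left (abs_add_le _ _) _)
      _ ≤ 4 * β + (K * β + K * β) + (K * β * K + K * (K * β)) := by
          refine add_le_add (add_le_add hbdd' ((abs_add_le _ _).trans
            (add_le_add bound1 bound2))) ((abs_add_le _ _).trans (add_le_add t1 t2))
  calc |(∫ ω, X ω * Y ω ∂μ) - (∫ ω, X ω ∂μ) * ∫ ω, Y ω ∂μ|
      ≤ 4 * β + (K * β + K * β) + (K * β * K + K * (K * β)) := final
    _ ≤ (4 + 4 * K ^ 2) * β := by
        nlinarith [mul_nonneg (mul_nonneg hβ.le (sub_nonneg.2 hK)) (by linarith : (0:ℝ) ≤ K)]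
    _ = (4 + 4 * K ^ 2) * Real.sqrt α := rfl



lemma pastSigma_le (U : ℕ → Ω → ℝ) (hMeas : ∀ i, Measurable (U i)) (k : ℕ) :
    pastSigma U k ≤ (inferInstance : MeasurableSpace Ω) :=
  iSup_le fun i => measurable_iff_comap_le.1 (hMeas i)

lemma futureSigma_le (U : ℕ → Ω → ℝ) (hMeas : ∀ i, Measurable (U i)) (m : ℕ) :
    futureSigma U m ≤ (inferInstance : MeasurableSpace Ω) :=
  iSup_le fun i => measurable_iff_comap_le.1 (hMeas _)

lemma measurable_past (U : ℕ → Ω → ℝ) (k m : ℕ) (h : m ≤ k) :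
    Measurable[pastSigma U k] (U m) := by
  refine measurable_iff_comap_le.2 ?_
  have : (⟨m, by omega⟩ : Fin (k+1)).1 = m := rfl
  calc MeasurableSpace.comap (U m) inferInstance
      = MeasurableSpace.comap (U (⟨m, by omega⟩ : Fin (k+1)).1) inferInstance := by rw [this]
    _ ≤ pastSigma U k := le_iSup (fun i : Fin (k+1) =>
        MeasurableSpace.comap (U i) inferInstance) ⟨m, by omega⟩

lemma measurable_future (U : ℕ → Ω → ℝ) (m d : ℕ) :
    Measurable[futureSigma U m] (U (m + d)) :=
  measurable_iff_comap_le.2 (le_iSup (fun i : ℕ =>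
    MeasurableSpace.comap (U (m + i)) inferInstance) d)

lemma transport (U : ℕ → Ω → ℝ) (hMeas : ∀ i, Measurable (U i))
    (hStat : ∀ k n : ℕ,
      Measure.map (fun ω => fun i : Fin (n + 1) => U (k + i) ω) ℙ
        = Measure.map (fun ω => fun i : Fin (n + 1) => U i ω) ℙ)
    (k n : ℕ) (F : (Fin (n + 1) → ℝ) → ℝ) (hF : Measurable F) :
    ∫ ω, F (fun i => U (k + i) ω) = ∫ ω, F (fun i => U i ω) := by
  have h1 : Measurable (fun ω => fun i : Fin (n + 1) => U (k + i) ω) :=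
    measurable_pi_lambda _ fun i => hMeas _
  have h2 : Measurable (fun ω => fun i : Fin (n + 1) => U i ω) :=
    measurable_pi_lambda _ fun i => hMeas _
  rw [← integral_map h1.aemeasurable hF.aestronglyMeasurable, hStat k n,
    integral_map h2.aemeasurable hF.aestronglyMeasurable]

lemma transport1 (U : ℕ → Ω → ℝ) (hMeas : ∀ i, Measurable (U i))
    (hStat : ∀ k n : ℕ,
      Measure.map (fun ω => fun i : Fin (n + 1) => U (k + i) ω) ℙ
        = Measure.map (fun ω => fun i : Fin (n + 1) => U i ω) ℙ)
    (k : ℕ) (f : ℝ → ℝ) (hf : Measurable f) :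
    ∫ ω, f (U k ω) = ∫ ω, f (U 0 ω) := by
  have := transport U hMeas hStat k 0 (fun x => f (x 0))
    (hf.comp (measurable_pi_apply 0))
  simpa using this

lemma transport2 (U : ℕ → Ω → ℝ) (hMeas : ∀ i, Measurable (U i))
    (hStat : ∀ k n : ℕ,
      Measure.map (fun ω => fun i : Fin (n + 1) => U (k + i) ω) ℙ
        = Measure.map (fun ω => fun i : Fin (n + 1) => U i ω) ℙ)
    (k j : ℕ) (g : ℝ → ℝ → ℝ) (hg : Measurable (Function.uncurry g)) :
    ∫ ω, g (U k ω) (U (k + j) ω) = ∫ ω, g (U 0 ω) (U j ω) := by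
  have hF : Measurable (fun x : Fin (j + 1) → ℝ => g (x 0) (x (Fin.last j))) := by
    have := hg.comp ((measurable_pi_apply (X := fun _ : Fin (j+1) => ℝ) 0).prodMk
      (measurable_pi_apply (Fin.last j)))
    exact this
  have := transport U hMeas hStat k j _ hF
  simpa [Fin.val_last] using this

lemma momInt (U : ℕ → Ω → ℝ) (hMeas : ∀ i, Measurable (U i))
    (hStat : ∀ k n : ℕ,
      Measure.map (fun ω => fun i : Fin (n + 1) => U (k + i) ω) ℙ
        = Measure.map (fun ω => fun i : Fin (n + 1) => U i ω) ℙ)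
    (hMom : ∀ p : ℕ, 1 ≤ p → Integrable (fun ω => |U 0 ω| ^ p) ℙ)
    (k p : ℕ) (hp : 1 ≤ p) : Integrable (fun ω => |U k ω| ^ p) ℙ := by
  have hFm : Measurable (fun x : Fin (0 + 1) → ℝ => |x 0| ^ p) :=
    ((measurable_pi_apply 0).abs).pow_const p
  have h1 : Measurable (fun ω => fun i : Fin (0 + 1) => U (k + i) ω) :=
    measurable_pi_lambda _ fun i => hMeas _
  have h2 : Measurable (fun ω => fun i : Fin (0 + 1) => U i ω) :=
    measurable_pi_lambda _ fun i => hMeas _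
  have e0 : Integrable (fun x : Fin (0 + 1) → ℝ => |x 0| ^ p)
      (Measure.map (fun ω => fun i : Fin (0 + 1) => U i ω) ℙ) := by
    rw [integrable_map_measure hFm.aestronglyMeasurable h2.aemeasurable]
    have he : ((fun x : Fin (0 + 1) → ℝ => |x 0| ^ p)
        ∘ (fun ω => fun i : Fin (0 + 1) => U i ω)) = fun ω => |U 0 ω| ^ p := by
      funext ω; simp
    rw [he]; exact hMom p hp
  rw [← hStat k 0] at e0
  rw [integrable_map_measure hFm.aestronglyMeasurable h1.aemeasurable] at e0
  have he : ((fun x : Fin (0 + 1) → ℝ => |x 0| ^ p)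
      ∘ (fun ω => fun i : Fin (0 + 1) => U (k + i) ω)) = fun ω => |U k ω| ^ p := by
    funext ω; simp
  rwa [he] at e0



lemma abs_mul_le_half_sq (a b : ℝ) : |a * b| ≤ (a ^ 2 + b ^ 2) / 2 := by
  rw [abs_mul]
  nlinarith [sq_nonneg (|a| - |b|), sq_abs a, sq_abs b, abs_nonneg a, abs_nonneg b]

lemma sq_le_one_add_pow6 (y : ℝ) : y ^ 2 ≤ 1 + y ^ 6 := by
  nlinarith [mul_nonneg (sq_nonneg (y ^ 2 - 1)) (sq_nonneg y), sq_nonneg (y ^ 2 - 1), sq_nonneg y]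

lemma ptY1 (a b nu : ℝ) : |(b - a) ^ 2 - nu| ≤ 2 * a ^ 2 + 2 * b ^ 2 + |nu| := by
  have h1 : (b - a) ^ 2 ≤ 2 * a ^ 2 + 2 * b ^ 2 := by nlinarith [sq_nonneg (a + b)]
  calc |(b - a) ^ 2 - nu| ≤ |(b - a) ^ 2| + |nu| := abs_sub _ _
    _ = (b - a) ^ 2 + |nu| := by rw [abs_of_nonneg (sq_nonneg _)]
    _ ≤ 2 * a ^ 2 + 2 * b ^ 2 + |nu| := by linarith

lemma ptY2 (a b nu : ℝ) :
    ((b - a) ^ 2 - nu) ^ 2 ≤ 16 * (a ^ 4 + b ^ 4) + 2 * nu ^ 2 := by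
  have h4 : (b + -a) ^ 4 ≤ 2 ^ 3 * (b ^ 4 + (-a) ^ 4) :=
    Even.add_pow_le (by decide)
  have h4' : (b - a) ^ 4 ≤ 8 * (a ^ 4 + b ^ 4) := by
    have e : (b + -a) = b - a := by ring
    rw [e] at h4
    nlinarith [h4]
  nlinarith [sq_nonneg ((b - a) ^ 2 + nu), sq_nonneg ((b-a)^2 - nu)]

lemma ptY6 (a b nu : ℝ) :
    ((b - a) ^ 2 - nu) ^ 6 ≤ 2 ^ 16 * (a ^ 12 + b ^ 12) + 2 ^ 5 * nu ^ 6 := by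
  have h1 : ((b - a) ^ 2 + -nu) ^ 6 ≤ 2 ^ 5 * (((b - a) ^ 2) ^ 6 + (-nu) ^ 6) :=
    Even.add_pow_le (by decide)
  have h2 : (b + -a) ^ 12 ≤ 2 ^ 11 * (b ^ 12 + (-a) ^ 12) :=
    Even.add_pow_le (by decide)
  have e1 : ((b - a) ^ 2 + -nu) = (b - a) ^ 2 - nu := by ring
  have e2 : ((b - a) ^ 2) ^ 6 = (b + -a) ^ 12 := by ring
  have e3 : (-nu) ^ 6 = nu ^ 6 := by ring
  rw [e1, e2, e3] at h1
  have e4 : (-a) ^ 12 = a ^ 12 := by ring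
  rw [e4] at h2
  nlinarith [h1, h2]

lemma pow6_abs_le (x c : ℝ) (h : |x| ≤ c) : x ^ 6 ≤ c ^ 6 := by
  have h1 : |x| ^ 6 ≤ c ^ 6 := pow_le_pow_left₀ (abs_nonneg x) h 6
  calc x ^ 6 = (x ^ 2) ^ 3 := by ring
    _ = (|x| ^ 2) ^ 3 := by rw [sq_abs x]
    _ = |x| ^ 6 := by ring
    _ ≤ c ^ 6 := h1


set_option maxHeartbeats 2000000 in
/-- assuming `v > 2`, with `ν_j := 2(Var(U_0) − γ(j))`,
`E[(Σ_{i=0}^{n−j} ((U_{i+j} − U_i)² − ν_j))²] ≤ C' n j`. -/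
theorem squared_increments_variance_bound
    {Ω : Type*} [MeasureSpace Ω] [IsProbabilityMeasure (ℙ : Measure Ω)]
    (U : ℕ → Ω → ℝ)
    (hMeas : ∀ i, Measurable (U i))
    (hStat : ∀ k n : ℕ,
      Measure.map (fun ω => fun i : Fin (n + 1) => U (k + i) ω) ℙ
        = Measure.map (fun ω => fun i : Fin (n + 1) => U i ω) ℙ)
    (hSymm : Measure.map (U 0) ℙ = Measure.map (fun ω => -U 0 ω) ℙ)
    (hMom : ∀ p : ℕ, 1 ≤ p → Integrable (fun ω => |U 0 ω| ^ p) ℙ)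
    (C v : ℝ) (hC : 0 < C)
    (hMix : ∀ k h : ℕ, 1 ≤ h → ∀ A B : Set Ω,
      MeasurableSet[pastSigma U k] A → MeasurableSet[futureSigma U (k + h)] B →
      |(ℙ (A ∩ B)).toReal - (ℙ A).toReal * (ℙ B).toReal| ≤ C * (h : ℝ) ^ (-v))
    (hv : 2 < v) :
    ∃ C' > (0 : ℝ), ∀ n j : ℕ, 1 ≤ n → 1 ≤ j → j ≤ n →
      ∫ ω, (∑ i ∈ Finset.range (n - j + 1),
          ((U (i + j) ω - U i ω) ^ 2 - 2 * (varU U - gammaCov U j))) ^ 2 ∂ℙ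
        ≤ C' * n * j := by
  classical
  have hPle : ∀ k, pastSigma U k ≤ (inferInstance : MeasurableSpace Ω) :=
    pastSigma_le U hMeas
  have hFle : ∀ k, futureSigma U k ≤ (inferInstance : MeasurableSpace Ω) :=
    futureSigma_le U hMeas
  have hUInt : ∀ k p, 1 ≤ p → Integrable (fun ω => |U k ω| ^ p) ℙ :=
    momInt U hMeas hStat hMom
  have hUpow : ∀ (k p : ℕ), 1 ≤ p → Even p →
      Integrable (fun ω => (U k ω) ^ p) ℙ := fun k p hp hep =>
    (hUInt k p hp).congr (Filter.Eventually.of_forall fun ω => hep.pow_abs _)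
  have hU2i : ∀ k, Integrable (fun ω => (U k ω) ^ 2) ℙ :=
    fun k => hUpow k 2 (by norm_num) (by decide)
  have hU4i : ∀ k, Integrable (fun ω => (U k ω) ^ 4) ℙ :=
    fun k => hUpow k 4 (by norm_num) (by decide)
  have hU12i : ∀ k, Integrable (fun ω => (U k ω) ^ 12) ℙ :=
    fun k => hUpow k 12 (by norm_num) (by decide)
  have hUU : ∀ a b : ℕ, Integrable (fun ω => U a ω * U b ω) ℙ := by
    intro a b
    have hdom : Integrable (fun ω => (U a ω ^ 2 + U b ω ^ 2) / 2) ℙ :=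
      ((hU2i a).add (hU2i b)).div_const 2
    refine hdom.mono' ((hMeas a).mul (hMeas b)).aestronglyMeasurable
      (Filter.Eventually.of_forall fun ω => ?_)
    rw [Real.norm_eq_abs]
    exact abs_mul_le_half_sq _ _
  have hEU0 : ∫ ω, U 0 ω = 0 := by
    have h1 : ∫ x, x ∂(Measure.map (U 0) ℙ) = ∫ ω, U 0 ω ∂ℙ :=
      integral_map (hMeas 0).aemeasurable aestronglyMeasurable_id
    have h2 : ∫ x, x ∂(Measure.map (fun ω => -U 0 ω) ℙ) = ∫ ω, -U 0 ω ∂ℙ :=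
      integral_map ((hMeas 0).neg).aemeasurable aestronglyMeasurable_id
    rw [hSymm, h2, integral_neg] at h1
    linarith
  set m2 : ℝ := ∫ ω, (U 0 ω) ^ 2 with hm2def
  set m12 : ℝ := ∫ ω, (U 0 ω) ^ 12 with hm12def
  have hm2nn : 0 ≤ m2 := integral_nonneg fun ω => sq_nonneg _
  have hm12nn : 0 ≤ m12 := integral_nonneg fun ω => by positivity
  have hU2val : ∀ k, ∫ ω, (U k ω) ^ 2 = m2 := fun k =>
    transport1 U hMeas hStat k (fun x => x ^ 2) (measurable_id.pow_const 2)
  have hU12val : ∀ k, ∫ ω, (U k ω) ^ 12 = m12 := fun k =>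
    transport1 U hMeas hStat k (fun x => x ^ 12) (measurable_id.pow_const 12)
  set K : ℝ := 1 + 2 ^ 17 * m12 + 2 ^ 5 * (4 * m2) ^ 6 with hKdef
  have hK1 : 1 ≤ K := by
    have := pow_nonneg (by linarith : (0:ℝ) ≤ 4 * m2) 6
    nlinarith
  set cst : ℝ := (4 + 4 * K ^ 2) * Real.sqrt C with hcstdef
  have hcstnn : 0 ≤ cst := by positivity
  have hsummable : Summable (fun h : ℕ => ((h + 1 : ℕ) : ℝ) ^ (-(v/2))) := by
    have h0 : Summable (fun n : ℕ => (n : ℝ) ^ (-(v/2))) :=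
      Real.summable_nat_rpow.mpr (by linarith)
    exact (summable_nat_add_iff 1).mpr h0
  set T : ℝ := ∑' h : ℕ, ((h + 1 : ℕ) : ℝ) ^ (-(v/2)) with hTdef
  have hTnn : 0 ≤ T := tsum_nonneg fun h => Real.rpow_nonneg (by positivity) _
  refine ⟨4 * K + 2 * cst * T, by nlinarith [mul_nonneg hcstnn hTnn], ?_⟩
  intro n j hn hj hjn
  set N : ℕ := n - j with hNdef
  set ν : ℝ := 2 * (varU U - gammaCov U j) with hνdef
  set Y : ℕ → Ω → ℝ := fun i ω => (U (i + j) ω - U i ω) ^ 2 - ν with hYdef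
  -- ν facts
  have hgam : gammaCov U j = ∫ ω, U 0 ω * U j ω := by
    rw [gammaCov, hEU0]; ring
  have hvar : varU U = m2 := by
    rw [varU, hEU0, hm2def]; ring
  have hν2 : ν = 2 * m2 - 2 * ∫ ω, U 0 ω * U j ω := by
    rw [hνdef, hgam, hvar]; ring
  have hU0Uj : |∫ ω, U 0 ω * U j ω| ≤ m2 := by
    have hdom : Integrable (fun ω => (U 0 ω ^ 2 + U j ω ^ 2) / 2) ℙ :=
      ((hU2i 0).add (hU2i j)).div_const 2
    calc |∫ ω, U 0 ω * U j ω| ≤ ∫ ω, |U 0 ω * U j ω| := by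
          simpa only [Real.norm_eq_abs] using norm_integral_le_integral_norm
            (fun ω => U 0 ω * U j ω) (μ := ℙ)
      _ ≤ ∫ ω, (U 0 ω ^ 2 + U j ω ^ 2) / 2 :=
          integral_mono (hUU 0 j).abs hdom fun ω => abs_mul_le_half_sq _ _
      _ = ((∫ ω, U 0 ω ^ 2) + ∫ ω, U j ω ^ 2) / 2 := by
          rw [integral_div, integral_add (hU2i 0) (hU2i j)]
      _ = m2 := by rw [hU2val 0, hU2val j]; ring
  have hνb : |ν| ≤ 4 * m2 := by
    rw [hν2]
    calc |2 * m2 - 2 * ∫ ω, U 0 ω * U j ω|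
        ≤ |2 * m2| + |2 * ∫ ω, U 0 ω * U j ω| := abs_sub _ _
      _ = 2 * m2 + 2 * |∫ ω, U 0 ω * U j ω| := by
          rw [abs_of_nonneg (by linarith), abs_mul, abs_of_nonneg (by norm_num : (0:ℝ) ≤ 2)]
      _ ≤ 4 * m2 := by linarith
  -- value of ∫ (U_{i+j} - U_i)^2
  have hWint : ∀ i, Integrable (fun ω => (U (i + j) ω - U i ω) ^ 2) ℙ := by
    intro i
    have hdom : Integrable (fun ω => 2 * U i ω ^ 2 + 2 * U (i + j) ω ^ 2) ℙ :=
      ((hU2i i).const_mul 2).add ((hU2i (i + j)).const_mul 2)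
    refine hdom.mono' (((hMeas (i + j)).sub (hMeas i)).pow_const 2).aestronglyMeasurable
      (Filter.Eventually.of_forall fun ω => ?_)
    rw [Real.norm_eq_abs, abs_of_nonneg (sq_nonneg _)]
    nlinarith [sq_nonneg (U i ω + U (i + j) ω)]
  have hWval : ∀ i, ∫ ω, (U (i + j) ω - U i ω) ^ 2 = ν := by
    intro i
    have hgm : Measurable (Function.uncurry fun x y : ℝ => (y - x) ^ 2) :=
      (measurable_snd.sub measurable_fst).pow_const 2
    have htr := transport2 U hMeas hStat i j (fun x y => (y - x) ^ 2) hgm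
    have e : ∀ ω, (U j ω - U 0 ω) ^ 2
        = U j ω ^ 2 + U 0 ω ^ 2 - 2 * (U 0 ω * U j ω) := fun ω => by ring
    have hi1 : Integrable (fun ω => U j ω ^ 2 + U 0 ω ^ 2) ℙ := (hU2i j).add (hU2i 0)
    have hi2 : Integrable (fun ω => 2 * (U 0 ω * U j ω)) ℙ := (hUU 0 j).const_mul 2
    calc ∫ ω, (U (i + j) ω - U i ω) ^ 2 = ∫ ω, (U j ω - U 0 ω) ^ 2 := htr
      _ = ∫ ω, (U j ω ^ 2 + U 0 ω ^ 2 - 2 * (U 0 ω * U j ω)) :=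
          integral_congr_ae (Filter.Eventually.of_forall e)
      _ = (∫ ω, (U j ω ^ 2 + U 0 ω ^ 2)) - ∫ ω, 2 * (U 0 ω * U j ω) :=
          integral_sub hi1 hi2
      _ = (∫ ω, U j ω ^ 2) + (∫ ω, U 0 ω ^ 2) - 2 * ∫ ω, U 0 ω * U j ω := by
          rw [integral_add (hU2i j) (hU2i 0), integral_const_mul]
      _ = ν := by rw [hU2val j, hU2val 0, hν2]; ring
  -- integrability of Y and its powers
  have hYmeas : ∀ i, Measurable (Y i) := fun i =>
    (((hMeas (i + j)).sub (hMeas i)).pow_const 2).sub measurable_const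
  have hYint : ∀ i, Integrable (Y i) ℙ := by
    intro i
    have hdom : Integrable
        (fun ω => 2 * U i ω ^ 2 + 2 * U (i + j) ω ^ 2 + |ν|) ℙ :=
      (((hU2i i).const_mul 2).add ((hU2i (i + j)).const_mul 2)).add
        (integrable_const |ν|)
    refine hdom.mono' (hYmeas i).aestronglyMeasurable
      (Filter.Eventually.of_forall fun ω => ?_)
    rw [Real.norm_eq_abs]
    exact ptY1 (U i ω) (U (i + j) ω) ν
  have hY2int : ∀ i, Integrable (fun ω => Y i ω ^ 2) ℙ := by
    intro i
    have hdom : Integrable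
        (fun ω => 16 * (U i ω ^ 4 + U (i + j) ω ^ 4) + 2 * ν ^ 2) ℙ :=
      (((hU4i i).add (hU4i (i + j))).const_mul 16).add (integrable_const _)
    refine hdom.mono' ((hYmeas i).pow_const 2).aestronglyMeasurable
      (Filter.Eventually.of_forall fun ω => ?_)
    rw [Real.norm_eq_abs, abs_of_nonneg (sq_nonneg _)]
    exact ptY2 (U i ω) (U (i + j) ω) ν
  have hY6int : ∀ i, Integrable (fun ω => Y i ω ^ 6) ℙ := by
    intro i
    have hdom : Integrable
        (fun ω => 2 ^ 16 * (U i ω ^ 12 + U (i + j) ω ^ 12) + 2 ^ 5 * ν ^ 6) ℙ :=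
      (((hU12i i).add (hU12i (i + j))).const_mul _).add (integrable_const _)
    refine hdom.mono' ((hYmeas i).pow_const 6).aestronglyMeasurable
      (Filter.Eventually.of_forall fun ω => ?_)
    rw [Real.norm_eq_abs, abs_of_nonneg (by positivity)]
    exact ptY6 (U i ω) (U (i + j) ω) ν
  have hYYint : ∀ a b, Integrable (fun ω => Y a ω * Y b ω) ℙ := by
    intro a b
    have hdom : Integrable (fun ω => (Y a ω ^ 2 + Y b ω ^ 2) / 2) ℙ :=
      ((hY2int a).add (hY2int b)).div_const 2
    refine hdom.mono' ((hYmeas a).mul (hYmeas b)).aestronglyMeasurable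
      (Filter.Eventually.of_forall fun ω => ?_)
    rw [Real.norm_eq_abs]
    exact abs_mul_le_half_sq _ _
  -- moment bounds
  have hEY6 : ∀ i, ∫ ω, Y i ω ^ 6 ≤ K - 1 := by
    intro i
    have hiadd : Integrable (fun ω => U i ω ^ 12 + U (i + j) ω ^ 12) ℙ :=
      (hU12i i).add (hU12i (i + j))
    have hmul : Integrable (fun ω => 2 ^ 16 * (U i ω ^ 12 + U (i + j) ω ^ 12)) ℙ :=
      hiadd.const_mul _
    have hdom : Integrable
        (fun ω => 2 ^ 16 * (U i ω ^ 12 + U (i + j) ω ^ 12) + 2 ^ 5 * ν ^ 6) ℙ :=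
      hmul.add (integrable_const _)
    have hν6 : ν ^ 6 ≤ (4 * m2) ^ 6 := pow6_abs_le ν (4 * m2) hνb
    calc ∫ ω, Y i ω ^ 6
        ≤ ∫ ω, (2 ^ 16 * (U i ω ^ 12 + U (i + j) ω ^ 12) + 2 ^ 5 * ν ^ 6) :=
          integral_mono (hY6int i) hdom fun ω => ptY6 (U i ω) (U (i + j) ω) ν
      _ = 2 ^ 16 * ((∫ ω, U i ω ^ 12) + ∫ ω, U (i + j) ω ^ 12) + 2 ^ 5 * ν ^ 6 := by
          rw [integral_add hmul (integrable_const _), integral_const_mul,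
            integral_add (hU12i i) (hU12i (i + j)), integral_const]
          simp
      _ = 2 ^ 17 * m12 + 2 ^ 5 * ν ^ 6 := by
          rw [hU12val i, hU12val (i + j)]; ring
      _ ≤ 2 ^ 17 * m12 + 2 ^ 5 * (4 * m2) ^ 6 := by linarith
      _ = K - 1 := by rw [hKdef]; ring
  have hEY2 : ∀ i, ∫ ω, Y i ω ^ 2 ≤ K := by
    intro i
    calc ∫ ω, Y i ω ^ 2 ≤ ∫ ω, (1 + Y i ω ^ 6) :=
          integral_mono (hY2int i) ((integrable_const 1).add (hY6int i))
            fun ω => sq_le_one_add_pow6 _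
      _ = 1 + ∫ ω, Y i ω ^ 6 := by
          rw [integral_add (integrable_const 1) (hY6int i), integral_const]
          simp
      _ ≤ 1 + (K - 1) := by linarith [hEY6 i]
      _ = K := by ring
  have hEY6' : ∀ i, ∫ ω, Y i ω ^ 6 ≤ K := fun i => (hEY6 i).trans (by linarith)
  have hEY0 : ∀ i, ∫ ω, Y i ω = 0 := by
    intro i
    have : ∫ ω, Y i ω = (∫ ω, (U (i + j) ω - U i ω) ^ 2) - ∫ (_ : Ω), ν := by
      exact integral_sub (hWint i) (integrable_const ν)
    rw [this, hWval i, integral_const]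
    simp
  -- measurability w.r.t. past and future σ-algebras
  have hYpast : ∀ i, Measurable[pastSigma U (i + j)] (Y i) := by
    intro i
    have h1 := measurable_past U (i + j) (i + j) le_rfl
    have h2 := measurable_past U (i + j) i (by omega)
    exact ((h1.sub h2).pow_const 2).sub measurable_const
  have hYfut : ∀ i, Measurable[futureSigma U i] (Y i) := by
    intro i
    have h1 : Measurable[futureSigma U i] (U i) := by
      simpa using measurable_future U i 0
    have h2 : Measurable[futureSigma U i] (U (i + j)) := measurable_future U i j
    exact ((h2.sub h1).pow_const 2).sub measurable_const
  -- the per-pair covariance bound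
  set g : ℕ → ℝ := fun d =>
    if d ≤ j then K else cst * ((d - j : ℕ) : ℝ) ^ (-(v/2)) with hgdef
  have hgnn : ∀ d, 0 ≤ g d := by
    intro d
    rw [hgdef]
    dsimp only
    split_ifs
    · linarith
    · exact mul_nonneg hcstnn (Real.rpow_nonneg (Nat.cast_nonneg _) _)
  have hpair : ∀ i i', i ≤ i' → |∫ ω, Y i ω * Y i' ω| ≤ g (i' - i) := by
    intro i i' hii
    by_cases hd : i' - i ≤ j
    · have hgval : g (i' - i) = K := by rw [hgdef]; exact if_pos hd
      rw [hgval]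
      have hdom : Integrable (fun ω => (Y i ω ^ 2 + Y i' ω ^ 2) / 2) ℙ :=
        ((hY2int i).add (hY2int i')).div_const 2
      calc |∫ ω, Y i ω * Y i' ω| ≤ ∫ ω, |Y i ω * Y i' ω| := by
            simpa only [Real.norm_eq_abs] using norm_integral_le_integral_norm
              (fun ω => Y i ω * Y i' ω) (μ := ℙ)
        _ ≤ ∫ ω, (Y i ω ^ 2 + Y i' ω ^ 2) / 2 :=
            integral_mono (hYYint i i').abs hdom fun ω => abs_mul_le_half_sq _ _
        _ = ((∫ ω, Y i ω ^ 2) + ∫ ω, Y i' ω ^ 2) / 2 := by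
            rw [integral_div, integral_add (hY2int i) (hY2int i')]
        _ ≤ (K + K) / 2 := by linarith [hEY2 i, hEY2 i']
        _ = K := by ring
    · -- mixing case
      set h : ℕ := i' - i - j with hhdef
      have hh1 : 1 ≤ h := by omega
      have hieq : i + j + h = i' := by omega
      have hhpos : (0:ℝ) < (h : ℝ) := by exact_mod_cast Nat.lt_of_lt_of_le Nat.zero_lt_one hh1
      have hα : ∀ A B : Set Ω, MeasurableSet[pastSigma U (i + j)] A →
          MeasurableSet[futureSigma U i'] B →
          |(ℙ (A ∩ B)).toReal - (ℙ A).toReal * (ℙ B).toReal| ≤ C * (h : ℝ) ^ (-v) := by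
        intro A B hA hB
        refine hMix (i + j) h hh1 A B hA ?_
        rwa [hieq]
      have hαpos : 0 < C * (h : ℝ) ^ (-v) :=
        mul_pos hC (Real.rpow_pos_of_pos hhpos _)
      have hcov := cov_mix (m0 := (inferInstance : MeasurableSpace Ω)) (μ := ℙ)
        (hPle (i + j)) (hFle i') hαpos hα (hYpast i) (hYfut i') hK1
        (hYint i) (hYint i') (hYYint i i') (hY2int i) (hY2int i')
        (hY6int i) (hY6int i') (hEY2 i) (hEY2 i') (hEY6' i) (hEY6' i')
      rw [hEY0 i, hEY0 i', zero_mul, sub_zero] at hcov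
      have hsqrt : (4 + 4 * K ^ 2) * Real.sqrt (C * (h : ℝ) ^ (-v))
          = cst * ((h : ℕ) : ℝ) ^ (-(v/2)) := by
        rw [Real.sqrt_mul hC.le, hcstdef]
        have e1 : Real.sqrt ((h : ℝ) ^ (-v)) = ((h : ℝ) ^ (-v)) ^ (1/(2:ℝ)) :=
          Real.sqrt_eq_rpow _
        have e2 : ((h : ℝ) ^ (-v)) ^ (1/(2:ℝ)) = (h : ℝ) ^ (-v * (1/(2:ℝ))) :=
          (Real.rpow_mul hhpos.le _ _).symm
        have e3 : -v * (1/(2:ℝ)) = -(v/2) := by ring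
        rw [e1, e2, e3]; ring
      have hgval : g (i' - i) = cst * ((h : ℕ) : ℝ) ^ (-(v/2)) := by
        rw [hgdef]
        dsimp only
        have : ¬ (i' - i ≤ j) := hd
        rw [if_neg this]
      rw [hgval, ← hsqrt]
      exact hcov
  -- expansion of the square of the sum
  have hexp : ∫ ω, (∑ i ∈ Finset.range (N + 1), Y i ω) ^ 2 ∂ℙ
      = ∑ i ∈ Finset.range (N + 1), ∑ i' ∈ Finset.range (N + 1),
          ∫ ω, Y i ω * Y i' ω := by
    have hpt : ∀ ω, (∑ i ∈ Finset.range (N + 1), Y i ω) ^ 2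
        = ∑ i ∈ Finset.range (N + 1), ∑ i' ∈ Finset.range (N + 1),
            Y i ω * Y i' ω := by
      intro ω
      rw [sq, Finset.sum_mul_sum]
    rw [integral_congr_ae (Filter.Eventually.of_forall hpt)]
    rw [integral_finset_sum _
      (fun i _ => integrable_finset_sum _ (fun i' _ => hYYint i i'))]
    exact Finset.sum_congr rfl fun i _ =>
      integral_finset_sum _ (fun i' _ => hYYint i i')
  -- pair bound in both orders
  have hpair2 : ∀ i i', ∫ ω, Y i ω * Y i' ω
      ≤ (if i ≤ i' then g (i' - i) else g (i - i')) := by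
    intro i i'
    by_cases hii : i ≤ i'
    · rw [if_pos hii]
      exact (le_abs_self _).trans (hpair i i' hii)
    · rw [if_neg hii]
      have hcomm : ∫ ω, Y i ω * Y i' ω = ∫ ω, Y i' ω * Y i ω := by
        congr 1; funext ω; ring
      rw [hcomm]
      exact (le_abs_self _).trans (hpair i' i (by omega))
  -- row bound
  have hrow : ∀ i, i ≤ N → ∑ i' ∈ Finset.range (N + 1),
      (if i ≤ i' then g (i' - i) else g (i - i'))
      ≤ 2 * ∑ d ∈ Finset.range (N + 1), g d := by
    intro i hiN
    rw [← Finset.sum_filter_add_sum_filter_not (Finset.range (N + 1))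
      (fun i' => i ≤ i')]
    have h1 : ∑ i' ∈ (Finset.range (N + 1)).filter (fun i' => i ≤ i'),
        (if i ≤ i' then g (i' - i) else g (i - i'))
        ≤ ∑ d ∈ Finset.range (N + 1), g d := by
      have e : ∀ i' ∈ (Finset.range (N + 1)).filter (fun i' => i ≤ i'),
          (if i ≤ i' then g (i' - i) else g (i - i')) = g (i' - i) := by
        intro i' hi'
        rw [if_pos (Finset.mem_filter.1 hi').2]
      rw [Finset.sum_congr rfl e]
      have hinj : ∀ x ∈ (Finset.range (N + 1)).filter (fun i' => i ≤ i'),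
          ∀ y ∈ (Finset.range (N + 1)).filter (fun i' => i ≤ i'),
          x - i = y - i → x = y := by
        intro x hx y hy hxy
        have hx' := (Finset.mem_filter.1 hx).2
        have hy' := (Finset.mem_filter.1 hy).2
        omega
      calc ∑ i' ∈ (Finset.range (N + 1)).filter (fun i' => i ≤ i'), g (i' - i)
          = ∑ d ∈ ((Finset.range (N + 1)).filter
              (fun i' => i ≤ i')).image (fun i' => i' - i), g d :=
            (Finset.sum_image hinj).symm
        _ ≤ ∑ d ∈ Finset.range (N + 1), g d := by
            refine Finset.sum_le_sum_of_subset_of_nonneg ?_ (fun d _ _ => hgnn d)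
            intro d hd
            obtain ⟨i', hi', rfl⟩ := Finset.mem_image.1 hd
            have := Finset.mem_range.1 (Finset.mem_filter.1 hi').1
            exact Finset.mem_range.2 (by omega)
    have h2 : ∑ i' ∈ (Finset.range (N + 1)).filter (fun i' => ¬ i ≤ i'),
        (if i ≤ i' then g (i' - i) else g (i - i'))
        ≤ ∑ d ∈ Finset.range (N + 1), g d := by
      have e : ∀ i' ∈ (Finset.range (N + 1)).filter (fun i' => ¬ i ≤ i'),
          (if i ≤ i' then g (i' - i) else g (i - i')) = g (i - i') := by
        intro i' hi'
        rw [if_neg (Finset.mem_filter.1 hi').2]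
      rw [Finset.sum_congr rfl e]
      have hinj : ∀ x ∈ (Finset.range (N + 1)).filter (fun i' => ¬ i ≤ i'),
          ∀ y ∈ (Finset.range (N + 1)).filter (fun i' => ¬ i ≤ i'),
          i - x = i - y → x = y := by
        intro x hx y hy hxy
        have hx' := (Finset.mem_filter.1 hx).2
        have hy' := (Finset.mem_filter.1 hy).2
        omega
      calc ∑ i' ∈ (Finset.range (N + 1)).filter (fun i' => ¬ i ≤ i'), g (i - i')
          = ∑ d ∈ ((Finset.range (N + 1)).filter
              (fun i' => ¬ i ≤ i')).image (fun i' => i - i'), g d :=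
            (Finset.sum_image hinj).symm
        _ ≤ ∑ d ∈ Finset.range (N + 1), g d := by
            refine Finset.sum_le_sum_of_subset_of_nonneg ?_ (fun d _ _ => hgnn d)
            intro d hd
            obtain ⟨i', hi', rfl⟩ := Finset.mem_image.1 hd
            have h3 := (Finset.mem_filter.1 hi').2
            exact Finset.mem_range.2 (by omega)
    linarith
  -- column bound
  have hcol : ∑ d ∈ Finset.range (N + 1), g d ≤ ((j : ℝ) + 1) * K + cst * T := by
    rw [← Finset.sum_filter_add_sum_filter_not (Finset.range (N + 1))
      (fun d => d ≤ j)]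
    have h1 : ∑ d ∈ (Finset.range (N + 1)).filter (fun d => d ≤ j), g d
        ≤ ((j : ℝ) + 1) * K := by
      have e : ∀ d ∈ (Finset.range (N + 1)).filter (fun d => d ≤ j), g d = K := by
        intro d hd
        rw [hgdef]; dsimp only
        exact if_pos (Finset.mem_filter.1 hd).2
      rw [Finset.sum_congr rfl e, Finset.sum_const, nsmul_eq_mul]
      have hcard : (((Finset.range (N + 1)).filter (fun d => d ≤ j)).card : ℝ)
          ≤ (j : ℝ) + 1 := by
        have hsub : (Finset.range (N + 1)).filter (fun d => d ≤ j)
            ⊆ Finset.range (j + 1) := by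
          intro d hd
          have := (Finset.mem_filter.1 hd).2
          exact Finset.mem_range.2 (by omega)
        have := Finset.card_le_card hsub
        rw [Finset.card_range] at this
        exact_mod_cast this
      exact mul_le_mul_of_nonneg_right hcard (by linarith)
    have h2 : ∑ d ∈ (Finset.range (N + 1)).filter (fun d => ¬ d ≤ j), g d
        ≤ cst * T := by
      have e : ∀ d ∈ (Finset.range (N + 1)).filter (fun d => ¬ d ≤ j),
          g d = cst * ((d - (j + 1) + 1 : ℕ) : ℝ) ^ (-(v/2)) := by
        intro d hd
        have hdj : ¬ d ≤ j := (Finset.mem_filter.1 hd).2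
        rw [hgdef]; dsimp only
        rw [if_neg hdj]
        have hnat : d - j = d - (j + 1) + 1 := by omega
        rw [hnat]
      rw [Finset.sum_congr rfl e, ← Finset.mul_sum]
      refine mul_le_mul_of_nonneg_left ?_ hcstnn
      have hinj : ∀ x ∈ (Finset.range (N + 1)).filter (fun d => ¬ d ≤ j),
          ∀ y ∈ (Finset.range (N + 1)).filter (fun d => ¬ d ≤ j),
          x - (j + 1) = y - (j + 1) → x = y := by
        intro x hx y hy hxy
        have hx' := (Finset.mem_filter.1 hx).2
        have hy' := (Finset.mem_filter.1 hy).2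
        omega
      have himg := Finset.sum_image
        (f := fun h : ℕ => ((h + 1 : ℕ) : ℝ) ^ (-(v/2)))
        (g := fun d : ℕ => d - (j + 1)) hinj
      calc ∑ d ∈ (Finset.range (N + 1)).filter (fun d => ¬ d ≤ j),
            ((d - (j + 1) + 1 : ℕ) : ℝ) ^ (-(v/2))
          = ∑ h ∈ ((Finset.range (N + 1)).filter
              (fun d => ¬ d ≤ j)).image (fun d => d - (j + 1)),
              ((h + 1 : ℕ) : ℝ) ^ (-(v/2)) := himg.symm
        _ ≤ T := by
            rw [hTdef]
            exact Summable.sum_le_tsum _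
              (fun h _ => Real.rpow_nonneg (by positivity) _) hsummable
    linarith
  -- total bound
  have hjR : (1 : ℝ) ≤ (j : ℝ) := by exact_mod_cast hj
  have hK0 : (0 : ℝ) ≤ K := by linarith
  have hsum_nn : (0 : ℝ) ≤ ((j : ℝ) + 1) * K + cst * T := by
    have := mul_nonneg (by linarith : (0:ℝ) ≤ (j:ℝ) + 1) hK0
    have := mul_nonneg hcstnn hTnn
    linarith
  have htotal : ∫ ω, (∑ i ∈ Finset.range (N + 1), Y i ω) ^ 2 ∂ℙ
      ≤ ((N : ℝ) + 1) * (2 * (((j : ℝ) + 1) * K + cst * T)) := by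
    rw [hexp]
    calc ∑ i ∈ Finset.range (N + 1), ∑ i' ∈ Finset.range (N + 1),
          ∫ ω, Y i ω * Y i' ω
        ≤ ∑ i ∈ Finset.range (N + 1), ∑ i' ∈ Finset.range (N + 1),
            (if i ≤ i' then g (i' - i) else g (i - i')) :=
          Finset.sum_le_sum fun i _ => Finset.sum_le_sum fun i' _ => hpair2 i i'
      _ ≤ ∑ i ∈ Finset.range (N + 1), 2 * ∑ d ∈ Finset.range (N + 1), g d :=
          Finset.sum_le_sum fun i hi =>
            hrow i (Nat.lt_succ_iff.1 (Finset.mem_range.1 hi))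
      _ = ((N : ℝ) + 1) * (2 * ∑ d ∈ Finset.range (N + 1), g d) := by
          rw [Finset.sum_const, nsmul_eq_mul, Finset.card_range]
          push_cast; ring
      _ ≤ ((N : ℝ) + 1) * (2 * (((j : ℝ) + 1) * K + cst * T)) := by
          refine mul_le_mul_of_nonneg_left (by linarith [hcol]) (by positivity)
  -- finish
  have hfinal : ((N : ℝ) + 1) * (2 * (((j : ℝ) + 1) * K + cst * T))
      ≤ (4 * K + 2 * cst * T) * n * j := by
    have hN1 : ((N : ℝ) + 1) ≤ (n : ℝ) := by
      have : N + 1 ≤ n := by omega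
      exact_mod_cast this
    have hj1 : ((j : ℝ) + 1) ≤ 2 * (j : ℝ) := by linarith
    have inner : 2 * (((j : ℝ) + 1) * K + cst * T)
        ≤ (j : ℝ) * (4 * K + 2 * cst * T) := by
      have e1 : ((j : ℝ) + 1) * K ≤ 2 * (j : ℝ) * K :=
        mul_le_mul_of_nonneg_right hj1 hK0
      have e2 : (0 : ℝ) ≤ ((j : ℝ) - 1) * (cst * T) :=
        mul_nonneg (by linarith) (mul_nonneg hcstnn hTnn)
      nlinarith
    have inner_nn : (0 : ℝ) ≤ 2 * (((j : ℝ) + 1) * K + cst * T) := by linarith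
    calc ((N : ℝ) + 1) * (2 * (((j : ℝ) + 1) * K + cst * T))
        ≤ (n : ℝ) * (2 * (((j : ℝ) + 1) * K + cst * T)) :=
          mul_le_mul_of_nonneg_right hN1 inner_nn
      _ ≤ (n : ℝ) * ((j : ℝ) * (4 * K + 2 * cst * T)) :=
          mul_le_mul_of_nonneg_left inner (by positivity)
      _ = (4 * K + 2 * cst * T) * n * j := by ring
  calc ∫ ω, (∑ i ∈ Finset.range (n - j + 1),
        ((U (i + j) ω - U i ω) ^ 2 - 2 * (varU U - gammaCov U j))) ^ 2 ∂ℙ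
      = ∫ ω, (∑ i ∈ Finset.range (N + 1), Y i ω) ^ 2 ∂ℙ := rfl
    _ ≤ ((N : ℝ) + 1) * (2 * (((j : ℝ) + 1) * K + cst * T)) := htotal
    _ ≤ (4 * K + 2 * cst * T) * n * j := hfinal


end DepNoise
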